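/- On the region Ω = {x : r(x) > 0}, the integral curves of k are geodesics with affine parameter r and expansion 2/r, i.e. for each a one has k^b ∂k^a/∂x^b = 0, and the divergence is ∂k^a/∂x^a = 2/r (sum over a = 0,1,2,3). -/

import Mathlib

open scoped BigOperators

noncomputable section

/-- The Minkowski metric η = diag(−1,1,1,1) on ℝ⁴. -/
def eta (i j : Fin 4) : ℝ := if i = j then (if i = 0 then -1 else 1) else 0

/-- Minkowski inner product a·b = η_{ij} a^i b^j. -/
def mdot (a b : Fin 4 → ℝ) : ℝ := ∑ i, ∑ j, eta i j * a i * b j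

/-- Lowering an index with η : k_i = η_{ij} k^j. -/
def lo (a : Fin 4 → ℝ) (i : Fin 4) : ℝ := ∑ j, eta i j * a j

open Topology Filter

lemma mdot_expand (a b : Fin 4 → ℝ) :
    mdot a b = -(a 0 * b 0) + a 1 * b 1 + a 2 * b 2 + a 3 * b 3 := by
  simp [mdot, eta, Fin.sum_univ_four]

lemma w0_pos (v w : Fin 4 → ℝ) (r : ℝ) (hr : 0 < r) (hv0 : 0 < v 0)
    (h1 : mdot w w = 0) (h2 : mdot v w = -r) (h3 : mdot v v = -1) : 0 < w 0 := by
  rw [mdot_expand] at h1 h2 h3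
  by_contra hcon
  push_neg at hcon
  have h4 : v 1 * w 1 + v 2 * w 2 + v 3 * w 3 = v 0 * w 0 - r := by linarith
  have cs : (v 1 * w 1 + v 2 * w 2 + v 3 * w 3) ^ 2
      ≤ (v 1 ^ 2 + v 2 ^ 2 + v 3 ^ 2) * (w 1 ^ 2 + w 2 ^ 2 + w 3 ^ 2) := by
    nlinarith [sq_nonneg (v 1 * w 2 - v 2 * w 1), sq_nonneg (v 1 * w 3 - v 3 * w 1),
      sq_nonneg (v 2 * w 3 - v 3 * w 2)]
  have h5 : (v 0 * w 0 - r) ^ 2 ≤ (v 0 ^ 2 - 1) * (w 0 ^ 2) := by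
    rw [← h4]
    calc (v 1 * w 1 + v 2 * w 2 + v 3 * w 3) ^ 2
        ≤ (v 1 ^ 2 + v 2 ^ 2 + v 3 ^ 2) * (w 1 ^ 2 + w 2 ^ 2 + w 3 ^ 2) := cs
      _ = (v 0 ^ 2 - 1) * (w 0 ^ 2) := by nlinarith []
  have h6 : 0 ≤ r * (v 0 * (-(w 0))) :=
    mul_nonneg hr.le (mul_nonneg hv0.le (by linarith))
  nlinarith [h5, h6, hr, sq_nonneg (w 0)]

def cov (c : Fin 4 → ℝ) : (Fin 4 → ℝ) →L[ℝ] ℝ :=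
  LinearMap.toContinuousLinearMap
    { toFun := fun h => mdot c h
      map_add' := by intro h g; simp [mdot_expand]; ring
      map_smul' := by intro s h; simp [mdot_expand]; ring }

@[simp] lemma cov_apply (c h : Fin 4 → ℝ) : cov c h = mdot c h := rfl


lemma mdot_smul_right (c d : Fin 4 → ℝ) (s : ℝ) : mdot c (s • d) = s * mdot c d := by
  simp [mdot_expand]; ring

lemma mdot_sub_right (c d e : Fin 4 → ℝ) : mdot c (d - e) = mdot c d - mdot c e := by
  simp [mdot_expand]; ring

lemma msingle0 (c : Fin 4 → ℝ) : mdot c (Pi.single 0 1) = -(c 0) := by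
  simp [mdot_expand, Pi.single_apply]

lemma msingle1 (c : Fin 4 → ℝ) : mdot c (Pi.single 1 1) = c 1 := by
  simp [mdot_expand, Pi.single_apply]

lemma msingle2 (c : Fin 4 → ℝ) : mdot c (Pi.single 2 1) = c 2 := by
  simp [mdot_expand, Pi.single_apply]

lemma msingle3 (c : Fin 4 → ℝ) : mdot c (Pi.single 3 1) = c 3 := by
  simp [mdot_expand, Pi.single_apply]

lemma pi_decomp (c : Fin 4 → ℝ) : ∑ b, c b • (Pi.single b 1 : Fin 4 → ℝ) = c := by
  funext j
  rw [Finset.sum_apply]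
  simp [Pi.single_apply]

lemma sum_single_mul (f : (Fin 4 → ℝ) →L[ℝ] ℝ) (c : Fin 4 → ℝ) :
    ∑ b, c b * f (Pi.single b 1) = f c := by
  conv_rhs => rw [← pi_decomp c]
  rw [map_sum]
  simp [smul_eq_mul]

/-- coordinate projection as a continuous linear map -/
def pr (i : Fin 4) : (Fin 4 → ℝ) →L[ℝ] ℝ := ContinuousLinearMap.proj i

@[simp] lemma pr_apply (i : Fin 4) (h : Fin 4 → ℝ) : pr i h = h i := rfl

-- differentiability of the retarded time u
lemma u_hasFDerivAt
    (z : ℝ → Fin 4 → ℝ) (hz : ContDiff ℝ (⊤ : ℕ∞) z)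
    (v : ℝ → Fin 4 → ℝ) (hzd : ∀ τ, HasDerivAt z (v τ) τ)
    (u : (Fin 4 → ℝ) → ℝ)
    (hu : ∀ x, mdot (x - z (u x)) (x - z (u x)) = 0 ∧ z (u x) 0 ≤ x 0)
    (huniq : ∀ x τ, mdot (x - z τ) (x - z τ) = 0 → z τ 0 ≤ x 0 → τ = u x)
    (x : Fin 4 → ℝ) (r₀ : ℝ) (hr : 0 < r₀)
    (hVW : mdot (v (u x)) (x - z (u x)) = -r₀)
    (hw0 : 0 < (x - z (u x)) 0) :
    HasFDerivAt u ((-(r₀)⁻¹) • cov (x - z (u x))) x := by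
  have hW2 : mdot (x - z (u x)) (x - z (u x)) = 0 := (hu x).1
  have hrne : r₀ ≠ 0 := ne_of_gt hr
  set Φ : ℝ × (Fin 4 → ℝ) → ℝ := fun p => mdot (p.2 - z p.1) (p.2 - z p.1) with hΦdef
  set p₀ : ℝ × (Fin 4 → ℝ) := (u x, x) with hp₀
  set w : Fin 4 → ℝ := x - z (u x) with hwdef
  set v₀ : Fin 4 → ℝ := v (u x) with hv₀
  -- smoothness of Φ
  have hG : ContDiff ℝ (⊤ : ℕ∞) (fun p : ℝ × (Fin 4 → ℝ) => p.2 - z p.1) := by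
    have h1 : ContDiff ℝ (⊤ : ℕ∞) (fun p : ℝ × (Fin 4 → ℝ) => z p.1) :=
      hz.comp contDiff_fst
    exact contDiff_snd.sub h1
  have hQC : ContDiff ℝ (⊤ : ℕ∞) (fun g : Fin 4 → ℝ => mdot g g) := by
    have : (fun g : Fin 4 → ℝ => mdot g g)
        = fun g : Fin 4 → ℝ => -(g 0 * g 0) + g 1 * g 1 + g 2 * g 2 + g 3 * g 3 :=
      funext fun g => mdot_expand g g
    rw [this]
    have hEv : ∀ i : Fin 4, ContDiff ℝ (⊤ : ℕ∞) (fun g : Fin 4 → ℝ => g i) :=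
      fun i => contDiff_apply ℝ ℝ i
    exact ((((hEv 0).mul (hEv 0)).neg.add ((hEv 1).mul (hEv 1))).add
      ((hEv 2).mul (hEv 2))).add ((hEv 3).mul (hEv 3))
  have hΦC : ContDiff ℝ (⊤ : ℕ∞) Φ := hQC.comp hG
  -- hand-computed derivative of Φ at p₀
  set G' : (ℝ × (Fin 4 → ℝ)) →L[ℝ] (Fin 4 → ℝ) :=
    ContinuousLinearMap.snd ℝ ℝ (Fin 4 → ℝ)
      - (ContinuousLinearMap.fst ℝ ℝ (Fin 4 → ℝ)).smulRight v₀ with hG'def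
  set Φ' : (ℝ × (Fin 4 → ℝ)) →L[ℝ] ℝ := (2 : ℝ) • ((cov w).comp G') with hΦ'def
  have hG'd : HasFDerivAt (fun p : ℝ × (Fin 4 → ℝ) => p.2 - z p.1) G' p₀ := by
    have h1 : HasFDerivAt z ((1 : ℝ →L[ℝ] ℝ).smulRight v₀) (u x) :=
      (hasDerivAt_iff_hasFDerivAt).1 (hzd (u x))
    have h2 : HasFDerivAt (fun p : ℝ × (Fin 4 → ℝ) => z p.1)
        (((1 : ℝ →L[ℝ] ℝ).smulRight v₀).comp
          (ContinuousLinearMap.fst ℝ ℝ (Fin 4 → ℝ))) p₀ :=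
      h1.comp p₀ (hasFDerivAt_fst)
    have h3 := (hasFDerivAt_snd (𝕜 := ℝ) (E := ℝ) (F := (Fin 4 → ℝ)) (p := p₀)).sub h2
    exact h3.congr_fderiv (ContinuousLinearMap.ext fun q => by simp [hG'def])
  have hQ'd : HasFDerivAt (fun g : Fin 4 → ℝ => mdot g g) ((2 : ℝ) • cov w) w := by
    have hfun : (fun g : Fin 4 → ℝ => mdot g g)
        = fun g : Fin 4 → ℝ => -(g 0 * g 0) + g 1 * g 1 + g 2 * g 2 + g 3 * g 3 :=
      funext fun g => mdot_expand g g
    rw [hfun]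
    have hpr : ∀ i : Fin 4, HasFDerivAt (fun g : Fin 4 → ℝ => g i)
        (pr i) w := fun i => hasFDerivAt_apply i w
    have h := ((((hpr 0).mul (hpr 0)).neg.add ((hpr 1).mul (hpr 1))).add
      ((hpr 2).mul (hpr 2))).add ((hpr 3).mul (hpr 3))
    refine h.congr_fderiv ?_
    ext h' : 1
    simp [mdot_expand]
    ring
  have hΦ'd : HasFDerivAt Φ Φ' p₀ := by
    have h := hQ'd.comp p₀ hG'd
    have : ((2 : ℝ) • cov w).comp G' = Φ' := by
      rw [hΦ'def, ContinuousLinearMap.smul_comp]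
    rw [← this]
    exact h
  have hΦstrict : HasStrictFDerivAt Φ Φ' p₀ := by
    have h0 : HasStrictFDerivAt Φ (fderiv ℝ Φ p₀) p₀ :=
      (hΦC.contDiffAt).hasStrictFDerivAt (by simp)
    rwa [hΦ'd.fderiv] at h0
  -- the map Ψ and its invertible derivative
  set Ψ : ℝ × (Fin 4 → ℝ) → ℝ × (Fin 4 → ℝ) := fun p => (Φ p, p.2) with hΨdef
  set Ψ' : (ℝ × (Fin 4 → ℝ)) →L[ℝ] ℝ × (Fin 4 → ℝ) :=
    Φ'.prod (ContinuousLinearMap.snd ℝ ℝ (Fin 4 → ℝ)) with hΨ'def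
  set B : (ℝ × (Fin 4 → ℝ)) →L[ℝ] ℝ × (Fin 4 → ℝ) :=
    (((2 * r₀)⁻¹) • (ContinuousLinearMap.fst ℝ ℝ (Fin 4 → ℝ)
      - (2 : ℝ) • ((cov w).comp (ContinuousLinearMap.snd ℝ ℝ (Fin 4 → ℝ))))).prod
      (ContinuousLinearMap.snd ℝ ℝ (Fin 4 → ℝ)) with hBdef
  have hwv : mdot w v₀ = -r₀ := by
    rw [mdot_expand] at hVW ⊢; linarith
  have hB1 : ∀ q : ℝ × (Fin 4 → ℝ),
      B q = ((2 * r₀)⁻¹ * (q.1 - 2 * mdot w q.2), q.2) := by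
    intro q
    simp only [hBdef, ContinuousLinearMap.prod_apply, ContinuousLinearMap.smul_apply,
      ContinuousLinearMap.sub_apply, ContinuousLinearMap.comp_apply, cov_apply,
      ContinuousLinearMap.coe_snd', ContinuousLinearMap.coe_fst', smul_eq_mul]
  have hΨ'app : ∀ p : ℝ × (Fin 4 → ℝ),
      Ψ' p = (2 * mdot w p.2 + 2 * r₀ * p.1, p.2) := by
    intro p
    have h2 : Φ' p = 2 * mdot w (p.2 - p.1 • v₀) := by
      simp only [hΦ'def, hG'def, ContinuousLinearMap.smul_apply,
        ContinuousLinearMap.comp_apply, cov_apply, ContinuousLinearMap.sub_apply,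
        ContinuousLinearMap.smulRight_apply, ContinuousLinearMap.coe_snd',
        ContinuousLinearMap.coe_fst', smul_eq_mul]
    have h3 : mdot w (p.2 - p.1 • v₀) = mdot w p.2 + r₀ * p.1 := by
      simp only [mdot_expand, Pi.sub_apply, Pi.smul_apply, smul_eq_mul] at hwv ⊢
      linear_combination (-p.1) * hwv
    have h1 : Ψ' p = (Φ' p, p.2) := rfl
    rw [h1, h2, h3]
    exact Prod.ext (by ring) rfl
  have hleft : Function.LeftInverse B Ψ' := by
    intro p
    rw [hΨ'app, hB1]
    refine Prod.ext ?_ rfl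
    show (2 * r₀)⁻¹ * (2 * mdot w p.2 + 2 * r₀ * p.1 - 2 * mdot w p.2) = p.1
    field_simp
    ring
  have hright : Function.RightInverse B Ψ' := by
    intro q
    rw [hB1, hΨ'app]
    refine Prod.ext ?_ rfl
    show 2 * mdot w q.2 + 2 * r₀ * ((2 * r₀)⁻¹ * (q.1 - 2 * mdot w q.2)) = q.1
    field_simp
    ring
  set A := ContinuousLinearEquiv.equivOfInverse Ψ' B hleft hright with hAdef
  have hΨstrict : HasStrictFDerivAt Ψ (A : (ℝ × (Fin 4 → ℝ)) →L[ℝ] ℝ × (Fin 4 → ℝ)) p₀ := by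
    have hc : (A : (ℝ × (Fin 4 → ℝ)) →L[ℝ] ℝ × (Fin 4 → ℝ)) = Ψ' := rfl
    rw [hc]
    exact hΦstrict.prodMk ((ContinuousLinearMap.snd ℝ ℝ (Fin 4 → ℝ)).hasStrictFDerivAt)
  have hΨp₀ : Ψ p₀ = ((0 : ℝ), x) := by
    refine Prod.ext ?_ rfl
    exact hW2
  set linv := hΨstrict.localInverse Ψ _ p₀ with hlinvdef
  have hrev : ∀ᶠ q in 𝓝 (Ψ p₀), Ψ (linv q) = q := hΨstrict.eventually_right_inverse
  have hfix : linv (Ψ p₀) = p₀ := hΨstrict.localInverse_apply_image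
  have hJ : Filter.Tendsto (fun y : Fin 4 → ℝ => ((0 : ℝ), y)) (𝓝 x) (𝓝 (Ψ p₀)) := by
    rw [hΨp₀]
    exact (Continuous.prodMk continuous_const continuous_id).tendsto x
  have hev1 : ∀ᶠ y in 𝓝 x, Ψ (linv ((0 : ℝ), y)) = ((0 : ℝ), y) := hJ.eventually hrev
  have hinvcont : ContinuousAt linv (Ψ p₀) := hΨstrict.localInverse_continuousAt
  have hτtend : Filter.Tendsto (fun y : Fin 4 → ℝ => (linv ((0 : ℝ), y)).1) (𝓝 x) (𝓝 (u x)) := by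
    have h1 : Filter.Tendsto (fun y : Fin 4 → ℝ => linv ((0 : ℝ), y)) (𝓝 x) (𝓝 p₀) := by
      have h0 := hinvcont.tendsto.comp hJ
      rw [hfix] at h0
      exact h0
    exact (continuous_fst.tendsto p₀).comp h1
  have hpos : (0 : ℝ) < x 0 - z (u x) 0 := hw0
  have hz0tend : Filter.Tendsto (fun y : Fin 4 → ℝ => y 0 - z ((linv ((0 : ℝ), y)).1) 0)
      (𝓝 x) (𝓝 (x 0 - z (u x) 0)) := by
    have h1 : Filter.Tendsto (fun y : Fin 4 → ℝ => y 0) (𝓝 x) (𝓝 (x 0)) :=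
      (continuous_apply 0).tendsto x
    have h2 : Filter.Tendsto (fun y : Fin 4 → ℝ => z ((linv ((0 : ℝ), y)).1) 0)
        (𝓝 x) (𝓝 (z (u x) 0)) := by
      have h3 : Filter.Tendsto (fun y : Fin 4 → ℝ => z ((linv ((0 : ℝ), y)).1))
          (𝓝 x) (𝓝 (z (u x))) := (hz.continuous.tendsto (u x)).comp hτtend
      exact ((continuous_apply 0).tendsto (z (u x))).comp h3
    exact h1.sub h2
  have hev2 : ∀ᶠ y in 𝓝 x, 0 < y 0 - z ((linv ((0 : ℝ), y)).1) 0 :=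
    hz0tend.eventually (eventually_gt_nhds hpos)
  have heq : ∀ᶠ y in 𝓝 x, (linv ((0 : ℝ), y)).1 = u y := by
    filter_upwards [hev1, hev2] with y h1 h2
    have hsnd : (linv ((0 : ℝ), y)).2 = y := congrArg Prod.snd h1
    have hfst : Φ (linv ((0 : ℝ), y)) = 0 := congrArg Prod.fst h1
    have h' : mdot ((linv ((0 : ℝ), y)).2 - z ((linv ((0 : ℝ), y)).1))
        ((linv ((0 : ℝ), y)).2 - z ((linv ((0 : ℝ), y)).1)) = 0 := hfst
    rw [hsnd] at h'
    have hnull := h'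
    exact huniq y _ hnull (by linarith)
  have hDinv : HasFDerivAt linv
      ((A.symm : (ℝ × (Fin 4 → ℝ)) →L[ℝ] ℝ × (Fin 4 → ℝ))) ((0 : ℝ), x) := by
    have h1 := hΨstrict.to_localInverse.hasFDerivAt
    rwa [hΨp₀] at h1
  have hcomp : HasFDerivAt (fun y : Fin 4 → ℝ => linv ((0 : ℝ), y))
      ((A.symm : (ℝ × (Fin 4 → ℝ)) →L[ℝ] ℝ × (Fin 4 → ℝ)).comp
        (ContinuousLinearMap.inr ℝ ℝ (Fin 4 → ℝ))) x := by
    have h2 : HasFDerivAt (fun y : Fin 4 → ℝ => ((0 : ℝ), y))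
        (ContinuousLinearMap.inr ℝ ℝ (Fin 4 → ℝ)) x :=
      (ContinuousLinearMap.inr ℝ ℝ (Fin 4 → ℝ)).hasFDerivAt
    exact hDinv.comp x h2
  have hufun : HasFDerivAt (fun y : Fin 4 → ℝ => (linv ((0 : ℝ), y)).1)
      ((ContinuousLinearMap.fst ℝ ℝ (Fin 4 → ℝ)).comp
        ((A.symm : (ℝ × (Fin 4 → ℝ)) →L[ℝ] ℝ × (Fin 4 → ℝ)).comp
          (ContinuousLinearMap.inr ℝ ℝ (Fin 4 → ℝ)))) x := hcomp.fst
  have hU : HasFDerivAt u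
      ((ContinuousLinearMap.fst ℝ ℝ (Fin 4 → ℝ)).comp
        ((A.symm : (ℝ × (Fin 4 → ℝ)) →L[ℝ] ℝ × (Fin 4 → ℝ)).comp
          (ContinuousLinearMap.inr ℝ ℝ (Fin 4 → ℝ)))) x :=
    hufun.congr_of_eventuallyEq (heq.mono fun y hy => hy.symm)
  have hclm : (ContinuousLinearMap.fst ℝ ℝ (Fin 4 → ℝ)).comp
        ((A.symm : (ℝ × (Fin 4 → ℝ)) →L[ℝ] ℝ × (Fin 4 → ℝ)).comp
          (ContinuousLinearMap.inr ℝ ℝ (Fin 4 → ℝ)))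
      = (-(r₀)⁻¹) • cov w := by
    ext h
    have hsymm : ∀ q : ℝ × (Fin 4 → ℝ),
        (A.symm : (ℝ × (Fin 4 → ℝ)) →L[ℝ] ℝ × (Fin 4 → ℝ)) q = B q := fun q => rfl
    simp only [ContinuousLinearMap.comp_apply, ContinuousLinearMap.inr_apply, hsymm, hB1,
      ContinuousLinearMap.coe_fst', ContinuousLinearMap.smul_apply, cov_apply, smul_eq_mul]
    field_simp
    ring
  rw [← hclm]
  exact hU


set_option maxHeartbeats 4000000 in
set_option maxRecDepth 4000 in
/-- On Ω = {x | r x > 0} the integral curves of `k` are geodesics with affine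
parameter `r` (`k^b ∂_b k^a = 0`) and expansion `2/r` (`∂_a k^a = 2/r`). -/
theorem null_rays_geodesic_expansion
    (z : ℝ → Fin 4 → ℝ) (hz : ContDiff ℝ (⊤ : ℕ∞) z)
    (v : ℝ → Fin 4 → ℝ) (hv : ∀ τ i, v τ i = deriv (fun t => z t i) τ)
    (hunit : ∀ τ, mdot (v τ) (v τ) = -1)
    (hfut : ∀ τ, 0 < v τ 0)
    (u : (Fin 4 → ℝ) → ℝ)
    (hu : ∀ x, mdot (x - z (u x)) (x - z (u x)) = 0 ∧ z (u x) 0 ≤ x 0)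
    (huniq : ∀ x τ, mdot (x - z τ) (x - z τ) = 0 → z τ 0 ≤ x 0 → τ = u x)
    (r : (Fin 4 → ℝ) → ℝ)
    (hr : ∀ x, r x = -mdot (v (u x)) (x - z (u x)))
    (k : (Fin 4 → ℝ) → Fin 4 → ℝ)
    (hk : ∀ x, k x = (r x)⁻¹ • (x - z (u x))) :
    ∀ x ∈ {x : Fin 4 → ℝ | 0 < r x},
      (∀ a : Fin 4, ∑ b, k x b * fderiv ℝ (fun y => k y a) x (Pi.single b 1) = 0) ∧
      ∑ a, fderiv ℝ (fun y => k y a) x (Pi.single a 1) = 2 / r x := by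
  have hzd : ∀ τ, HasDerivAt z (v τ) τ := by
    intro τ
    have h1 : DifferentiableAt ℝ z τ :=
      (hz.differentiable (by simp)).differentiableAt
    have h2 := h1.hasDerivAt
    have h3 : v τ = deriv z τ := by
      funext i
      rw [hv]
      exact ((hasDerivAt_pi.1 h2) i).deriv
    rw [h3]; exact h2
  have hvC : ContDiff ℝ (⊤ : ℕ∞) v := by
    have : v = deriv z := funext fun τ => ((hzd τ).deriv).symm ▸ rfl
    rw [this]
    exact (contDiff_infty_iff_deriv.mp hz).2
  have hvd : ∀ τ, HasDerivAt v (deriv v τ) τ := fun τ =>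
    ((hvC.differentiable (by simp)).differentiableAt).hasDerivAt
  intro x hx
  simp only [Set.mem_setOf_eq] at hx
  have hrne : r x ≠ 0 := ne_of_gt hx
  have hVW : mdot (v (u x)) (x - z (u x)) = -(r x) := by
    have := hr x; linarith
  have hw0 : 0 < (x - z (u x)) 0 :=
    w0_pos (v (u x)) (x - z (u x)) (r x) hx (hfut (u x)) (hu x).1 hVW (hunit (u x))
  have hU : HasFDerivAt u ((-(r x)⁻¹) • cov (x - z (u x))) x :=
    u_hasFDerivAt z hz v hzd u hu huniq x (r x) hx hVW hw0
  set Du : (Fin 4 → ℝ) →L[ℝ] ℝ := (-(r x)⁻¹) • cov (x - z (u x)) with hDudef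
  set W' : (Fin 4 → ℝ) →L[ℝ] (Fin 4 → ℝ) :=
    ContinuousLinearMap.id ℝ (Fin 4 → ℝ) - Du.smulRight (v (u x)) with hW'def
  set R' : (Fin 4 → ℝ) →L[ℝ] ℝ :=
    -((cov (x - z (u x))).comp (Du.smulRight (deriv v (u x))) + (cov (v (u x))).comp W') with hR'def
  have hzu : HasFDerivAt (fun y => z (u y)) (Du.smulRight (v (u x))) x := by
    have h1 : HasFDerivAt z ((1 : ℝ →L[ℝ] ℝ).smulRight (v (u x))) (u x) :=
      hasDerivAt_iff_hasFDerivAt.1 (hzd (u x))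
    have h2 := h1.comp x hU
    exact h2.congr_fderiv (ContinuousLinearMap.ext fun h => by simp)
  have hWd : HasFDerivAt (fun y => y - z (u y)) W' x := (hasFDerivAt_id x).sub hzu
  have hVud : HasFDerivAt (fun y => v (u y)) (Du.smulRight (deriv v (u x))) x := by
    have h1 : HasFDerivAt v ((1 : ℝ →L[ℝ] ℝ).smulRight (deriv v (u x))) (u x) :=
      hasDerivAt_iff_hasFDerivAt.1 (hvd (u x))
    have h2 := h1.comp x hU
    exact h2.congr_fderiv (ContinuousLinearMap.ext fun h => by simp)
  have hVi : ∀ i, HasFDerivAt (fun y => v (u y) i)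
      ((ContinuousLinearMap.proj i).comp (Du.smulRight (deriv v (u x)))) x :=
    fun i => hasFDerivAt_pi'.1 hVud i
  have hWi : ∀ i, HasFDerivAt (fun y => (y - z (u y)) i)
      ((ContinuousLinearMap.proj i).comp W') x :=
    fun i => hasFDerivAt_pi'.1 hWd i
  have hRd : HasFDerivAt r R' x := by
    have hF := ((((hVi 0).mul (hWi 0)).sub ((hVi 1).mul (hWi 1))).sub
      ((hVi 2).mul (hWi 2))).sub ((hVi 3).mul (hWi 3))
    have hrfun : r = fun y => (v (u y) 0 * (y - z (u y)) 0 - v (u y) 1 * (y - z (u y)) 1)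
        - v (u y) 2 * (y - z (u y)) 2 - v (u y) 3 * (y - z (u y)) 3 := by
      funext y
      rw [hr y, mdot_expand]
      ring
    rw [hrfun]
    refine hF.congr_fderiv ?_
    ext h : 1
    simp only [hR'def, hW'def, hDudef, ContinuousLinearMap.neg_apply,
      ContinuousLinearMap.add_apply, ContinuousLinearMap.comp_apply,
      ContinuousLinearMap.smulRight_apply, ContinuousLinearMap.sub_apply,
      ContinuousLinearMap.smul_apply, ContinuousLinearMap.coe_id', id_eq,
      ContinuousLinearMap.proj_apply, cov_apply, mdot_expand, Pi.smul_apply,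
      Pi.sub_apply, smul_eq_mul]
    ring
  set K' : Fin 4 → ((Fin 4 → ℝ) →L[ℝ] ℝ) := fun a =>
    (-((x - z (u x)) a) * ((r x) ^ 2)⁻¹) • R' + (r x)⁻¹ • ((ContinuousLinearMap.proj a).comp W')
    with hK'def
  have hKd : ∀ a, HasFDerivAt (fun y => k y a) (K' a) x := by
    intro a
    have hinvd : HasDerivAt Inv.inv (-((r x) ^ 2)⁻¹) (r x) := hasDerivAt_inv hrne
    have hinv : HasFDerivAt (fun y => (r y)⁻¹) ((-((r x) ^ 2)⁻¹) • R') x :=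
      hinvd.comp_hasFDerivAt x hRd
    have hmul := hinv.mul (hWi a)
    have hkfun : (fun y => k y a) = fun y => (r y)⁻¹ * (y - z (u y)) a := by
      funext y
      rw [hk y]
      simp
    rw [hkfun]
    refine hmul.congr_fderiv ?_
    ext h : 1
    simp only [hK'def, ContinuousLinearMap.add_apply, ContinuousLinearMap.smul_apply,
      ContinuousLinearMap.comp_apply, ContinuousLinearMap.proj_apply,
      ContinuousLinearMap.neg_apply, smul_eq_mul]
    ring
  have hfd : ∀ a, fderiv ℝ (fun y => k y a) x = K' a := fun a => (hKd a).fderiv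
  have hW2' : -((x 0 - z (u x) 0) * (x 0 - z (u x) 0)) + (x 1 - z (u x) 1) * (x 1 - z (u x) 1) + (x 2 - z (u x) 2) * (x 2 - z (u x) 2) + (x 3 - z (u x) 3) * (x 3 - z (u x) 3) = 0 := by
    have h := (hu x).1
    rw [mdot_expand] at h
    simpa using h
  have hVW' : -((v (u x)) 0 * (x 0 - z (u x) 0)) + (v (u x)) 1 * (x 1 - z (u x) 1) + (v (u x)) 2 * (x 2 - z (u x) 2) + (v (u x)) 3 * (x 3 - z (u x) 3) = -(r x) := by
    have h := hVW
    rw [mdot_expand] at h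
    simpa using h
  have hs : (r x)⁻¹ * (r x) = 1 := inv_mul_cancel₀ hrne
  have hkx : ∀ b, k x b = (r x)⁻¹ * (x - z (u x)) b := by
    intro b; rw [hk x]; simp
  constructor
  · intro a
    simp only [hfd]
    rw [sum_single_mul]
    -- evaluate K' a at k x
    have hDuk : Du (k x) = 0 := by
      simp only [hDudef, ContinuousLinearMap.smul_apply, cov_apply, smul_eq_mul]
      rw [hk x, mdot_smul_right, (hu x).1]
      ring
    have hW'k : W' (k x) = k x := by
      simp only [hW'def, ContinuousLinearMap.sub_apply, ContinuousLinearMap.smulRight_apply,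
        ContinuousLinearMap.coe_id', id_eq, hDuk]
      simp
    have hR'k : R' (k x) = 1 := by
      simp only [hR'def, ContinuousLinearMap.neg_apply, ContinuousLinearMap.add_apply,
        ContinuousLinearMap.comp_apply, ContinuousLinearMap.smulRight_apply, cov_apply,
        hDuk, hW'k]
      rw [hk x, mdot_smul_right, mdot_smul_right, hVW]
      field_simp
      ring
    simp only [hK'def, ContinuousLinearMap.add_apply, ContinuousLinearMap.smul_apply,
      ContinuousLinearMap.comp_apply, ContinuousLinearMap.proj_apply, hR'k, hW'k,
      smul_eq_mul]
    rw [hk x]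
    simp only [Pi.smul_apply, smul_eq_mul]
    field_simp
    ring
  · simp only [hfd]
    rw [Fin.sum_univ_four]
    simp only [hK'def, hR'def, hW'def, hDudef, ContinuousLinearMap.add_apply,
      ContinuousLinearMap.smul_apply, ContinuousLinearMap.comp_apply,
      ContinuousLinearMap.neg_apply, ContinuousLinearMap.smulRight_apply,
      ContinuousLinearMap.sub_apply, ContinuousLinearMap.coe_id', id_eq,
      ContinuousLinearMap.proj_apply, cov_apply, mdot_sub_right, mdot_smul_right,
      msingle0, msingle1, msingle2, msingle3, Pi.single_eq_same, Pi.sub_apply,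
      Pi.smul_apply, smul_eq_mul, hunit (u x)]
    linear_combination (-((r x)⁻¹^3) * mdot (x - z (u x)) (deriv v (u x)) - (r x)⁻¹^3) * hW2'
      + (2*(r x)⁻¹^2) * hVW' + (-(2*(r x)⁻¹)) * hs
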